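/- For every vector V : S → ℝ, the value-iteration sequence of iterates T^k V converges (in the sup norm on S → ℝ) as k → ∞ to the unique fixed point V* of T. -/

import Mathlib

open Finset Filter

noncomputable def supNorm {S : Type*} [Fintype S] [Nonempty S] (V : S → ℝ) : ℝ :=
  Finset.univ.sup' Finset.univ_nonempty fun s => |V s|

noncomputable def bellmanT {S A : Type*} [Fintype S] [Fintype A] [Nonempty A]
    (P R : S → A → S → ℝ) (γ : ℝ) (V : S → ℝ) : S → ℝ :=
  fun s => Finset.univ.sup' Finset.univ_nonempty
    fun a => ∑ s', P s a s' * (R s a s' + γ * V s')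

lemma supNorm_nonneg {S : Type*} [Fintype S] [Nonempty S] (V : S → ℝ) : 0 ≤ supNorm V := by
  obtain ⟨s⟩ := ‹Nonempty S›
  unfold supNorm
  exact le_trans (abs_nonneg (V s)) (Finset.le_sup' (fun t => |V t|) (Finset.mem_univ s))

lemma abs_le_supNorm {S : Type*} [Fintype S] [Nonempty S] (V : S → ℝ) (s : S) :
    |V s| ≤ supNorm V := by
  unfold supNorm
  exact Finset.le_sup' (fun t => |V t|) (Finset.mem_univ s)

lemma supNorm_le {S : Type*} [Fintype S] [Nonempty S] (V : S → ℝ) (c : ℝ)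
    (h : ∀ s, |V s| ≤ c) : supNorm V ≤ c := by
  unfold supNorm
  exact Finset.sup'_le _ _ fun s _ => h s

lemma bellman_contract {n : ℕ} [NeZero n] {A : Type*} [Fintype A] [Nonempty A]
    (P R : Fin n → A → Fin n → ℝ)
    (hP0 : ∀ s a s', 0 ≤ P s a s') (hP1 : ∀ s a, ∑ s', P s a s' = 1)
    (γ : ℝ) (hγ0 : 0 ≤ γ) (V W : Fin n → ℝ) :
    supNorm (bellmanT P R γ V - bellmanT P R γ W) ≤ γ * supNorm (V - W) := by
  apply supNorm_le
  intro s
  have key : ∀ a : A, |(∑ s', P s a s' * (R s a s' + γ * V s')) -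
      (∑ s', P s a s' * (R s a s' + γ * W s'))| ≤ γ * supNorm (V - W) := by
    intro a
    rw [← Finset.sum_sub_distrib]
    calc |∑ s', (P s a s' * (R s a s' + γ * V s') - P s a s' * (R s a s' + γ * W s'))|
        ≤ ∑ s', |P s a s' * (R s a s' + γ * V s') - P s a s' * (R s a s' + γ * W s')| :=
          Finset.abs_sum_le_sum_abs _ _
      _ = ∑ s', P s a s' * (γ * |V s' - W s'|) := by
          apply Finset.sum_congr rfl
          intro s' _
          rw [← mul_sub,
            show R s a s' + γ * V s' - (R s a s' + γ * W s') = γ * (V s' - W s') by ring,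
            abs_mul, abs_mul, abs_of_nonneg (hP0 s a s'), abs_of_nonneg hγ0]
      _ ≤ ∑ s', P s a s' * (γ * supNorm (V - W)) := by
          apply Finset.sum_le_sum
          intro s' _
          exact mul_le_mul_of_nonneg_left
            (mul_le_mul_of_nonneg_left (abs_le_supNorm (V - W) s') hγ0) (hP0 s a s')
      _ = γ * supNorm (V - W) := by
          rw [← Finset.sum_mul, hP1 s a, one_mul]
  -- |sup' f - sup' g| ≤ c
  have hne : (Finset.univ : Finset A).Nonempty := Finset.univ_nonempty
  simp only [Pi.sub_apply, bellmanT]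
  rw [abs_sub_le_iff]
  constructor
  · rw [sub_le_iff_le_add]
    apply Finset.sup'_le
    intro a _
    calc (∑ s', P s a s' * (R s a s' + γ * V s'))
        ≤ (∑ s', P s a s' * (R s a s' + γ * W s')) + γ * supNorm (V - W) := by
          have := key a
          rw [abs_sub_le_iff] at this
          linarith [this.1]
      _ ≤ _ :=
          add_le_add_left (Finset.le_sup'
            (fun a => ∑ s', P s a s' * (R s a s' + γ * W s')) (Finset.mem_univ a)) _
      _ ≤ _ := le_of_eq (add_comm _ _)
  · rw [sub_le_iff_le_add]
    apply Finset.sup'_le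
    intro a _
    calc (∑ s', P s a s' * (R s a s' + γ * W s'))
        ≤ (∑ s', P s a s' * (R s a s' + γ * V s')) + γ * supNorm (V - W) := by
          have := key a
          rw [abs_sub_le_iff] at this
          linarith [this.2]
      _ ≤ _ :=
          add_le_add_left (Finset.le_sup'
            (fun a => ∑ s', P s a s' * (R s a s' + γ * V s')) (Finset.mem_univ a)) _
      _ ≤ _ := le_of_eq (add_comm _ _)

theorem value_iteration_converges (n : ℕ) [NeZero n] (A : Type*) [Fintype A] [Nonempty A]
    (P R : Fin n → A → Fin n → ℝ)
    (hP0 : ∀ s a s', 0 ≤ P s a s') (hP1 : ∀ s a, ∑ s', P s a s' = 1)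
    (γ : ℝ) (hγ0 : 0 ≤ γ) (hγ1 : γ < 1)
    (Vstar : Fin n → ℝ) (hfix : bellmanT P R γ Vstar = Vstar) :
    ∀ V : Fin n → ℝ,
      Filter.Tendsto (fun k : ℕ => supNorm ((bellmanT P R γ)^[k] V - Vstar))
        Filter.atTop (nhds 0) := by
  intro V
  have hbound : ∀ k : ℕ, supNorm ((bellmanT P R γ)^[k] V - Vstar) ≤
      γ ^ k * supNorm (V - Vstar) := by
    intro k
    induction k with
    | zero => simp
    | succ k ih =>
      rw [Function.iterate_succ_apply']
      calc supNorm (bellmanT P R γ ((bellmanT P R γ)^[k] V) - Vstar)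
          = supNorm (bellmanT P R γ ((bellmanT P R γ)^[k] V) - bellmanT P R γ Vstar) := by
            rw [hfix]
        _ ≤ γ * supNorm ((bellmanT P R γ)^[k] V - Vstar) :=
            bellman_contract P R hP0 hP1 γ hγ0 _ _
        _ ≤ γ * (γ ^ k * supNorm (V - Vstar)) := by
            exact mul_le_mul_of_nonneg_left ih hγ0
        _ = γ ^ (k + 1) * supNorm (V - Vstar) := by ring
  have hgeo : Filter.Tendsto (fun k : ℕ => γ ^ k * supNorm (V - Vstar))
      Filter.atTop (nhds 0) := by
    have := tendsto_pow_atTop_nhds_zero_of_lt_one hγ0 hγ1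
    simpa using this.mul_const (supNorm (V - Vstar))
  exact squeeze_zero (fun k => supNorm_nonneg _) hbound hgeo
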